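/- Δ* = {p ∈ βN : every A ∈ p has positive upper Banach density d*(A) > 0} is a closed two-sided ideal of (βN,+); consequently cl K(βN) ⊆ Δ*. -/

import Mathlib

open scoped Classical

attribute [local instance] Ultrafilter.addSemigroup

/-- Upper Banach density of `A ⊆ ℕ`:
`d*(A) = sup {α ∈ ℝ : ∀ k, ∃ n > k, ∃ a, |A ∩ {a+1, …, a+n}| ≥ α·n}`. -/
noncomputable def bannachDensity (A : Set ℕ) : ℝ :=
  sSup {α : ℝ | ∀ k : ℕ, ∃ n : ℕ, n > k ∧ ∃ a : ℕ,
    α * n ≤ ((Finset.Icc (a + 1) (a + n)).filter (· ∈ A)).card}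

/-- `Δ* = {p ∈ βℕ : every member of p has positive upper Banach density}`. -/
noncomputable def DeltaStar : Set (Ultrafilter ℕ) :=
  {p | ∀ A ∈ p, 0 < bannachDensity A}

/-- `I` is a two-sided ideal of `(βℕ, +)`. -/
def IsAddIdeal (I : Set (Ultrafilter ℕ)) : Prop :=
  I.Nonempty ∧ ∀ p ∈ I, ∀ q : Ultrafilter ℕ, q + p ∈ I ∧ p + q ∈ I

/-! ### Auxiliary lemmas -/

/-- The defining set of densities. -/
def dS (A : Set ℕ) : Set ℝ :=
  {α : ℝ | ∀ k : ℕ, ∃ n : ℕ, n > k ∧ ∃ a : ℕ,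
    α * n ≤ ((Finset.Icc (a + 1) (a + n)).filter (· ∈ A)).card}

lemma bD_eq (A : Set ℕ) : bannachDensity A = sSup (dS A) := rfl

lemma zero_mem_dS (A : Set ℕ) : (0:ℝ) ∈ dS A := by
  intro k; exact ⟨k+1, Nat.lt_succ_self k, 0, by rw [zero_mul]; positivity⟩

lemma dS_nonempty (A : Set ℕ) : (dS A).Nonempty := ⟨0, zero_mem_dS A⟩

lemma bddAbove_dS (A : Set ℕ) : BddAbove (dS A) := by
  refine ⟨1, fun α hα => ?_⟩
  obtain ⟨n, hn, a, h⟩ := hα 0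
  have hc : (((Finset.Icc (a + 1) (a + n)).filter (· ∈ A)).card : ℝ) ≤ n := by
    have := Finset.card_filter_le (Finset.Icc (a + 1) (a + n)) (· ∈ A)
    have h2 : (Finset.Icc (a + 1) (a + n)).card = n := by rw [Nat.card_Icc]; omega
    exact_mod_cast h2 ▸ this
  have hn' : (0:ℝ) < n := by exact_mod_cast hn
  nlinarith

lemma bD_pos_of_mem {A : Set ℕ} {α : ℝ} (hα : α ∈ dS A) (h0 : 0 < α) :
    0 < bannachDensity A :=
  h0.trans_le (le_csSup (bddAbove_dS A) hα)

/-- If every finite subset of `B` can be translated into `A`, then `d*(B) ≤ d*(A)`. -/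
lemma dS_subset_of_shift {A B : Set ℕ}
    (H : ∀ F : Finset ℕ, ↑F ⊆ B → ∃ b, ∀ x ∈ F, x + b ∈ A) : dS B ⊆ dS A := by
  intro α hα k
  obtain ⟨n, hn, c, hc⟩ := hα k
  set F := (Finset.Icc (c + 1) (c + n)).filter (· ∈ B) with hF
  obtain ⟨b, hb⟩ := H F (fun x hx => (Finset.mem_filter.1 hx).2)
  refine ⟨n, hn, c + b, ?_⟩
  have himg : F.image (· + b) ⊆ (Finset.Icc (c + b + 1) (c + b + n)).filter (· ∈ A) := by
    intro y hy
    obtain ⟨x, hx, rfl⟩ := Finset.mem_image.1 hy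
    have hxI := (Finset.mem_filter.1 hx).1
    rw [Finset.mem_Icc] at hxI
    exact Finset.mem_filter.2 ⟨Finset.mem_Icc.2 (by omega), hb x hx⟩
  have hcard : F.card = (F.image (· + b)).card :=
    (Finset.card_image_of_injective F (add_left_injective b)).symm
  calc α * n ≤ F.card := hc
    _ = ((F.image (· + b)).card : ℝ) := by exact_mod_cast hcard
    _ ≤ _ := by exact_mod_cast Finset.card_le_card himg

lemma bD_le_of_shift {A B : Set ℕ}
    (H : ∀ F : Finset ℕ, ↑F ⊆ B → ∃ b, ∀ x ∈ F, x + b ∈ A) :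
    bannachDensity B ≤ bannachDensity A :=
  csSup_le_csSup (bddAbove_dS A) (dS_nonempty B) (dS_subset_of_shift H)

lemma bD_mono {A B : Set ℕ} (h : A ⊆ B) : bannachDensity A ≤ bannachDensity B :=
  bD_le_of_shift fun F hF => ⟨0, fun x hx => by simpa using h (hF hx)⟩

lemma bD_pos_union {X Y : Set ℕ} (h : 0 < bannachDensity (X ∪ Y)) :
    0 < bannachDensity X ∨ 0 < bannachDensity Y := by
  obtain ⟨α, hα, h0⟩ := exists_lt_of_lt_csSup (dS_nonempty (X ∪ Y)) h
  by_cases hX : α / 2 ∈ dS X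
  · exact Or.inl (bD_pos_of_mem hX (by linarith))
  · right
    rw [dS, Set.mem_setOf_eq] at hX
    push_neg at hX
    obtain ⟨k₀, hk₀⟩ := hX
    refine bD_pos_of_mem (α := α / 2) ?_ (by linarith)
    intro k
    obtain ⟨n, hn, a, hna⟩ := hα (max k k₀)
    refine ⟨n, lt_of_le_of_lt (le_max_left k k₀) hn, a, ?_⟩
    have hXsmall := hk₀ n (lt_of_le_of_lt (le_max_right k k₀) hn) a
    simp only [Set.mem_union] at hna
    rw [Finset.filter_or] at hna
    have hcard := Finset.card_union_le
      ((Finset.Icc (a + 1) (a + n)).filter (· ∈ X))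
      ((Finset.Icc (a + 1) (a + n)).filter (· ∈ Y))
    have hcard' : ((((Finset.Icc (a + 1) (a + n)).filter (· ∈ X)) ∪
        ((Finset.Icc (a + 1) (a + n)).filter (· ∈ Y))).card : ℝ) ≤
        (((Finset.Icc (a + 1) (a + n)).filter (· ∈ X)).card : ℝ) +
        (((Finset.Icc (a + 1) (a + n)).filter (· ∈ Y)).card : ℝ) := by
      exact_mod_cast hcard
    have hhalf : α / 2 * (n:ℝ) + α / 2 * (n:ℝ) = α * n := by ring
    linarith

lemma bD_univ_pos : 0 < bannachDensity (Set.univ : Set ℕ) := by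
  refine bD_pos_of_mem (α := 1) ?_ one_pos
  intro k
  refine ⟨k + 1, Nat.lt_succ_self k, 0, ?_⟩
  simp only [Set.mem_univ, Finset.filter_true, Nat.card_Icc]
  push_cast
  norm_num

/-- The filter of sets whose complement has zero upper Banach density. -/
noncomputable def densityFilter : Filter ℕ where
  sets := {A | ¬ 0 < bannachDensity Aᶜ}
  univ_sets := by
    simp only [Set.mem_setOf_eq, Set.compl_univ]
    intro h
    have h0 : bannachDensity (∅ : Set ℕ) ≤ 0 := by
      rw [bD_eq]
      refine csSup_le (dS_nonempty ∅) fun α hα => ?_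
      obtain ⟨n, hn, a, ha⟩ := hα 0
      simp only [Set.mem_empty_iff_false, Finset.filter_false, Finset.card_empty,
        Nat.cast_zero] at ha
      have hn' : (0:ℝ) < n := by exact_mod_cast hn
      nlinarith
    linarith
  sets_of_superset := by
    intro A B hA hAB
    simp only [Set.mem_setOf_eq] at *
    exact fun h => hA (lt_of_lt_of_le h (bD_mono (Set.compl_subset_compl.2 hAB)))
  inter_sets := by
    intro A B hA hB
    simp only [Set.mem_setOf_eq] at *
    intro h
    rw [Set.compl_inter] at h
    rcases bD_pos_union h with h' | h'
    · exact hA h'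
    · exact hB h'

lemma densityFilter_neBot : densityFilter.NeBot := by
  rw [Filter.neBot_iff]
  intro h
  have : (∅ : Set ℕ) ∈ densityFilter := h ▸ Filter.mem_bot
  have h2 : ¬ 0 < bannachDensity (∅ : Set ℕ)ᶜ := this
  rw [Set.compl_empty] at h2
  exact h2 bD_univ_pos

lemma mem_add_iff (U V : Ultrafilter ℕ) (A : Set ℕ) :
    A ∈ U + V ↔ {a | {b | a + b ∈ A} ∈ V} ∈ U := Iff.rfl

/-- `Δ*` is a closed two-sided ideal of `(βℕ,+)`; consequently `cl K(βℕ) ⊆ Δ*`,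
where `K(βℕ)` is the smallest two-sided ideal (the intersection of all ideals). -/
theorem deltaStar_closed_ideal :
    IsClosed DeltaStar ∧ IsAddIdeal DeltaStar ∧
      closure {p : Ultrafilter ℕ | ∀ I : Set (Ultrafilter ℕ), IsAddIdeal I → p ∈ I} ⊆
        DeltaStar := by
  have hclosed : IsClosed DeltaStar := by
    have : DeltaStar = ⋂ A ∈ {A : Set ℕ | ¬ 0 < bannachDensity A},
        {p : Ultrafilter ℕ | A ∈ p}ᶜ := by
      ext p
      simp only [DeltaStar, Set.mem_setOf_eq, Set.mem_iInter, Set.mem_compl_iff]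
      constructor
      · intro hp A hA hAp; exact hA (hp A hAp)
      · intro hp A hAp
        by_contra h
        exact hp A h hAp
    rw [this]
    exact isClosed_biInter fun A _ => (ultrafilter_isOpen_basic A).isClosed_compl
  have hne : DeltaStar.Nonempty := by
    have := densityFilter_neBot
    obtain ⟨p, hp⟩ := Ultrafilter.exists_le densityFilter
    refine ⟨p, fun A hA => ?_⟩
    by_contra h
    have hAc : Aᶜ ∈ densityFilter := by
      show ¬ 0 < bannachDensity Aᶜᶜ
      rwa [compl_compl]
    have : Aᶜ ∈ p := hp hAc
    exact (Ultrafilter.compl_mem_iff_notMem.1 this) hA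
  have hideal : IsAddIdeal DeltaStar := by
    refine ⟨hne, fun p hp q => ⟨?_, ?_⟩⟩
    · -- q + p ∈ Δ*
      intro A hA
      rw [mem_add_iff] at hA
      obtain ⟨a, ha⟩ := Filter.nonempty_of_mem (Ultrafilter.mem_coe.2 hA)
      have hpa : 0 < bannachDensity {b | a + b ∈ A} := hp _ ha
      refine lt_of_lt_of_le hpa (bD_le_of_shift ?_)
      intro F hF
      exact ⟨a, fun x hx => by have := hF hx; rwa [Set.mem_setOf_eq, add_comm] at this⟩
    · -- p + q ∈ Δ*
      intro A hA
      rw [mem_add_iff] at hA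
      have hB : 0 < bannachDensity {a | {b | a + b ∈ A} ∈ q} := hp _ hA
      refine lt_of_lt_of_le hB (bD_le_of_shift ?_)
      intro F hF
      have hint : (⋂ x ∈ F, {b | x + b ∈ A}) ∈ q :=
        (Filter.biInter_finset_mem F).2 fun x hx => hF hx
      obtain ⟨b, hb⟩ := Filter.nonempty_of_mem (Ultrafilter.mem_coe.2 hint)
      simp only [Set.mem_iInter, Set.mem_setOf_eq] at hb
      exact ⟨b, fun x hx => hb x hx⟩
  refine ⟨hclosed, hideal, ?_⟩
  refine closure_minimal ?_ hclosed
  intro p hp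
  exact hp DeltaStar ⟨hne, hideal.2⟩
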